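/- For x, i ∈ {0,1} define ω_x := (1/4)(I₄ + (−1)^x • Y₄) and e_i := (1/2)(I₄ + (−1)^i • Y₄). Then: (a) each ω_x is a two-rebit state (real symmetric positive semidefinite of trace 1); (b) e₀ and e₁ are real symmetric positive semidefinite with e₀ + e₁ = I₄, so {e₀, e₁} is a valid two-outcome measurement; (c) trace(e_i * ω_x) = 1 if i = x and 0 otherwise, so the measurement perfectly distinguishes ω₀ from ω₁; and (d) trace(ω₀ * (E ⊗ₖ F)) = trace(ω₁ * (E ⊗ₖ F)) for all real symmetric 2×2 matrices E, F, so no product effect reveals any information about x. Hence this encoding achieves perfectly secure data hiding in real quantum theory. -/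

import Mathlib

open Matrix Kronecker

/-- The real 2×2 matrix with rows (0, −1) and (1, 0). -/
noncomputable def y : Matrix (Fin 2) (Fin 2) ℝ := !![0, -1; 1, 0]

/-- The real 4×4 matrix representing σ_y ⊗ σ_y. -/
noncomputable def Y₄ : Matrix (Fin 2 × Fin 2) (Fin 2 × Fin 2) ℝ := -(y ⊗ₖ y)

/-- A two-rebit state: a real symmetric positive semidefinite 4×4 matrix of trace 1. -/
def IsTwoRebitState (ρ : Matrix (Fin 2 × Fin 2) (Fin 2 × Fin 2) ℝ) : Prop :=
  ρ.IsSymm ∧ ρ.PosSemidef ∧ ρ.trace = 1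

/-- The data-hiding states ω_x = (1/4)(I₄ + (−1)^x σ_y ⊗ σ_y). -/
noncomputable def ωdh (x : Fin 2) : Matrix (Fin 2 × Fin 2) (Fin 2 × Fin 2) ℝ :=
  (1 / 4 : ℝ) • ((1 : Matrix (Fin 2 × Fin 2) (Fin 2 × Fin 2) ℝ)
    + ((-1 : ℝ) ^ (x : ℕ)) • Y₄)

/-- The decoding effects e_i = (1/2)(I₄ + (−1)^i σ_y ⊗ σ_y). -/
noncomputable def edh (i : Fin 2) : Matrix (Fin 2 × Fin 2) (Fin 2 × Fin 2) ℝ :=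
  (1 / 2 : ℝ) • ((1 : Matrix (Fin 2 × Fin 2) (Fin 2 × Fin 2) ℝ)
    + ((-1 : ℝ) ^ (i : ℕ)) • Y₄)



lemma Y4_symm : Y₄.IsSymm := by
  ext ⟨i,j⟩ ⟨k,l⟩
  fin_cases i <;> fin_cases j <;> fin_cases k <;> fin_cases l <;>
    simp [Y₄, y, Matrix.transpose_apply, kroneckerMap_apply]

lemma Y4_sq : Y₄ * Y₄ = 1 := by
  ext ⟨i,j⟩ ⟨k,l⟩
  simp only [Y₄, Matrix.mul_apply, Fintype.sum_prod_type, Fin.sum_univ_two]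
  fin_cases i <;> fin_cases j <;> fin_cases k <;> fin_cases l <;>
    simp [y, Matrix.one_apply, kroneckerMap_apply, Prod.ext_iff]

lemma Y4_trace : Y₄.trace = 0 := by
  simp [Y₄, trace, Matrix.diag, Fintype.sum_prod_type, Fin.sum_univ_two, y, kroneckerMap_apply]

lemma smul_psd {A : Matrix (Fin 2 × Fin 2) (Fin 2 × Fin 2) ℝ} (hA : A.PosSemidef)
    {c : ℝ} (hc : 0 ≤ c) : (c • A).PosSemidef := by
  rw [posSemidef_iff_dotProduct_mulVec]
  constructor
  · unfold Matrix.IsHermitian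
    rw [conjTranspose_smul, hA.1.eq]
    simp
  · intro x
    rw [smul_mulVec, dotProduct_smul, smul_eq_mul]
    exact mul_nonneg hc (hA.dotProduct_mulVec_nonneg x)

lemma psd_aux (s : ℝ) (hs : s = 1 ∨ s = -1) :
    ((1 : Matrix (Fin 2 × Fin 2) (Fin 2 × Fin 2) ℝ) + s • Y₄).PosSemidef := by
  rw [posSemidef_iff_dotProduct_mulVec]
  constructor
  · unfold Matrix.IsHermitian
    rw [conjTranspose_add, conjTranspose_smul, conjTranspose_one]
    rw [conjTranspose_eq_transpose_of_trivial, Y4_symm.eq, star_trivial]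
  · intro x
    simp only [dotProduct, mulVec, Fintype.sum_prod_type, Fin.sum_univ_two, Y₄, y,
      kroneckerMap_apply, Matrix.one_apply, Prod.ext_iff, Matrix.add_apply, Matrix.smul_apply,
      Matrix.neg_apply, Pi.star_apply, star_trivial, of_apply, cons_val', cons_val_zero,
      cons_val_one, head_cons, head_fin_const, empty_val', cons_val_fin_one]
    rcases hs with h|h <;> subst h <;> norm_num [Fin.ext_iff] <;>
      nlinarith [sq_nonneg (x (0,0) - x (1,1)), sq_nonneg (x (0,1) + x (1,0)),
        sq_nonneg (x (0,0) + x (1,1)), sq_nonneg (x (0,1) - x (1,0))]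

lemma trace_y_mul {E : Matrix (Fin 2) (Fin 2) ℝ} (hE : E.IsSymm) : (y * E).trace = 0 := by
  have h := hE.apply 0 1
  simp only [trace, Matrix.diag, Fin.sum_univ_two, Matrix.mul_apply, y,
    of_apply, cons_val', cons_val_zero, cons_val_one, head_cons, empty_val',
    cons_val_fin_one, head_fin_const]
  linarith

lemma trace_Y4_prod {E F : Matrix (Fin 2) (Fin 2) ℝ} (hE : E.IsSymm) (hF : F.IsSymm) :
    (Y₄ * (E ⊗ₖ F)).trace = 0 := by
  rw [Y₄, neg_mul, trace_neg, ← mul_kronecker_mul, trace_kronecker, trace_y_mul hE]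
  simp

lemma trace_one4 : (1 : Matrix (Fin 2 × Fin 2) (Fin 2 × Fin 2) ℝ).trace = 4 := by
  rw [trace_one]
  simp


/-- **Example 2 of the paper: perfectly secure data hiding using rebits.**
(a) Each ω_x is a two-rebit state; (b) the e_i are symmetric positive
semidefinite and sum to the identity, hence a valid two-outcome measurement;
(c) the measurement perfectly distinguishes ω₀ from ω₁; and (d) no product
effect reveals any information about the encoded bit x. -/
theorem stmt15 :
    (∀ x : Fin 2, IsTwoRebitState (ωdh x)) ∧
    ((∀ i : Fin 2, (edh i).IsSymm ∧ (edh i).PosSemidef) ∧ edh 0 + edh 1 = 1) ∧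
    (∀ i x : Fin 2, (edh i * ωdh x).trace = if i = x then 1 else 0) ∧
    (∀ E F : Matrix (Fin 2) (Fin 2) ℝ, E.IsSymm → F.IsSymm →
      (ωdh 0 * (E ⊗ₖ F)).trace = (ωdh 1 * (E ⊗ₖ F)).trace) := by
  have hsymm : ∀ (c s : ℝ),
      ((c : ℝ) • ((1 : Matrix (Fin 2 × Fin 2) (Fin 2 × Fin 2) ℝ) + s • Y₄)).IsSymm := by
    intro c s
    unfold Matrix.IsSymm
    rw [transpose_smul, transpose_add, transpose_one, transpose_smul, Y4_symm.eq]
  have htr : ∀ (c s : ℝ),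
      ((c : ℝ) • ((1 : Matrix (Fin 2 × Fin 2) (Fin 2 × Fin 2) ℝ) + s • Y₄)).trace = c * 4 := by
    intro c s
    rw [trace_smul, trace_add, trace_smul, trace_one4, Y4_trace]
    simp
  refine ⟨?_, ⟨?_, ?_⟩, ?_, ?_⟩
  · intro x
    refine ⟨hsymm _ _, smul_psd (psd_aux _ ?_) (by norm_num), ?_⟩
    · fin_cases x <;> [left; right] <;> norm_num
    · rw [ωdh, htr]; norm_num
  · intro i
    exact ⟨hsymm _ _, smul_psd (psd_aux _ (by fin_cases i <;> [left; right] <;> norm_num))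
      (by norm_num)⟩
  · show (1/2 : ℝ) • _ + (1/2 : ℝ) • _ = _
    norm_num
    module
  · intro i x
    have key : ∀ a b : ℝ, (((1 : Matrix (Fin 2 × Fin 2) (Fin 2 × Fin 2) ℝ) + a • Y₄) *
        ((1 : Matrix (Fin 2 × Fin 2) (Fin 2 × Fin 2) ℝ) + b • Y₄)).trace = 4 * (1 + a * b) := by
      intro a b
      have expand : ((1 : Matrix (Fin 2 × Fin 2) (Fin 2 × Fin 2) ℝ) + a • Y₄) *
          ((1 : Matrix (Fin 2 × Fin 2) (Fin 2 × Fin 2) ℝ) + b • Y₄)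
          = 1 + (a + b) • Y₄ + (a * b) • (1 : Matrix (Fin 2 × Fin 2) (Fin 2 × Fin 2) ℝ) := by
        simp only [add_mul, mul_add, one_mul, mul_one, smul_mul_assoc, mul_smul_comm,
          smul_smul, Y4_sq]
        module
      rw [expand, trace_add, trace_add, trace_smul, trace_smul, Y4_trace, trace_one4]
      simp
      ring
    rw [edh, ωdh, smul_mul_assoc, mul_smul_comm, smul_smul, trace_smul, smul_eq_mul, key]
    fin_cases i <;> fin_cases x <;> norm_num
  · intro E F hE hF
    have : ωdh 0 = ωdh 1 + (1/2 : ℝ) • Y₄ := by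
      show (1/4 : ℝ) • _ = (1/4 : ℝ) • _ + _
      norm_num
      module
    rw [this, add_mul, trace_add, smul_mul_assoc, trace_smul, trace_Y4_prod hE hF]
    simp
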